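/- Let Q be a real quadratic form on ℝ^d of signature (1, d−1) (one positive and d−1 negative eigenvalues). Then the set C = {λ ∈ ℝ^d : Q(λ) ≥ 1} has the property that each of its connected components is convex. Moreover, if L is a linear functional and λ^c ∈ ℝ^d satisfies Q(λ^c) > 0, L(λ^c) > 0, and ∇(L²)(λ^c) is parallel to ∇Q(λ^c), then λ^c is a global minimum of λ ↦ L(λ)²/Q(λ) on the component of {Q > 0} containing λ^c. -/

import Mathlib

private lemma revCS_scalar (a b p q s : ℝ) (hp : 0 ≤ p) (hq : 0 ≤ q) (hs : s^2 ≤ p*q)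
    (ha : p < a^2) (hb : q < b^2) :
    (a^2 - p) * (b^2 - q) ≤ (a*b - s)^2 := by
  rcases eq_or_lt_of_le hp with h0 | h0
  · have hs0 : s = 0 := by nlinarith
    subst hs0; rw [← h0]
    nlinarith [mul_nonneg (sq_nonneg a) hq]
  · nlinarith [sq_nonneg (b*p - a*s), mul_nonneg (sub_pos.mpr ha).le (sub_nonneg.mpr hs)]

private lemma conv_scalar (a b u0 v0 p q s : ℝ) (ha : 0 ≤ a) (hb : 0 ≤ b) (hab : a + b = 1)
    (hp : 0 ≤ p) (hq : 0 ≤ q) (hs : s^2 ≤ p*q) (hu : 1 + p ≤ u0^2) (hv : 1 + q ≤ v0^2)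
    (hu0 : 0 < u0) (hv0 : 0 < v0) :
    1 + (a^2*p + 2*(a*b)*s + b^2*q) ≤ (a*u0+b*v0)^2 := by
  have h2s : 2*s ≤ p + q := by nlinarith [sq_nonneg (p - q), sq_nonneg (p + q - 2*s)]
  have huv : 1 + s ≤ u0*v0 := by
    nlinarith [mul_pos hu0 hv0, sq_nonneg (u0*v0 + 1 + s), sq_nonneg (u0*v0 - 1 - s)]
  nlinarith [mul_nonneg (sq_nonneg a) (sub_nonneg.mpr hu), mul_nonneg (sq_nonneg b) (sub_nonneg.mpr hv),
    mul_nonneg (mul_nonneg ha hb) (sub_nonneg.mpr huv)]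

set_option maxHeartbeats 1000000 in
theorem hyperbolic_quadratic_form_min (d : ℕ) (hd : 1 ≤ d)
    (Q : (Fin d → ℝ) → ℝ) (e : (Fin d → ℝ) ≃ₗ[ℝ] (Fin d → ℝ))
    (hQ : ∀ x, Q x = (e x ⟨0, hd⟩) ^ 2 - ∑ i ∈ Finset.univ.erase (⟨0, hd⟩ : Fin d), (e x i) ^ 2) :
    (∀ x ∈ {w : Fin d → ℝ | 1 ≤ Q w},
      Convex ℝ (connectedComponentIn {w : Fin d → ℝ | 1 ≤ Q w} x)) ∧
    ∀ (L : (Fin d → ℝ) →ₗ[ℝ] ℝ) (lc : Fin d → ℝ),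
      0 < Q lc → 0 < L lc →
      (∃ μ : ℝ, ∀ v, fderiv ℝ (fun x => (L x) ^ 2) lc v = μ * fderiv ℝ Q lc v) →
      ∀ lam ∈ connectedComponentIn {x : Fin d → ℝ | 0 < Q x} lc,
        (L lc) ^ 2 / Q lc ≤ (L lam) ^ 2 / Q lam := by
  classical
  set i0 : Fin d := ⟨0, hd⟩ with hi0
  set T : Finset (Fin d) := Finset.univ.erase i0 with hTdef
  -- basic facts
  have hsumnn : ∀ w : Fin d → ℝ, (0:ℝ) ≤ ∑ i ∈ T, (e w i)^2 :=
    fun w => Finset.sum_nonneg fun i _ => sq_nonneg _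
  have hez : ∀ (a b : ℝ) (y z : Fin d → ℝ) (i : Fin d),
      e (a • y + b • z) i = a * e y i + b * e z i := by
    intro a b y z i
    simp [map_add, map_smul]
  have hCS : ∀ y z : Fin d → ℝ,
      (∑ i ∈ T, e y i * e z i)^2 ≤ (∑ i ∈ T, (e y i)^2) * (∑ i ∈ T, (e z i)^2) :=
    fun y z => Finset.sum_mul_sq_le_sq_mul_sq T _ _
  constructor
  · -- Part 1 : convexity of connected components
    intro x hx
    have hx1 : 1 ≤ Q x := hx
    have hsq : ∀ w : Fin d → ℝ, 1 ≤ Q w → 1 ≤ (e w i0)^2 := by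
      intro w hw
      rw [hQ w] at hw
      have := hsumnn w
      linarith
    set S : Set (Fin d → ℝ) := {w : Fin d → ℝ | 1 ≤ Q w} with hS
    set ε : ℝ := if 0 < e x i0 then 1 else -1 with hεdef
    have hε2 : ε^2 = 1 := by
      rw [hεdef]; split <;> norm_num
    have hεx : 1 ≤ ε * e x i0 := by
      have h1 := hsq x hx1
      rw [hεdef]
      split
      · rename_i h; nlinarith
      · rename_i h; push_neg at h; nlinarith
    set P : Set (Fin d → ℝ) := {w : Fin d → ℝ | 1 ≤ Q w ∧ 1 ≤ ε * e w i0} with hP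
    have hPconv : Convex ℝ P := by
      intro y hy z hz a b ha hb hab
      obtain ⟨hy1, hy2⟩ := hy
      obtain ⟨hz1, hz2⟩ := hz
      have hp := hsumnn y
      have hq := hsumnn z
      have hs := hCS y z
      have hQY : 1 + ∑ i ∈ T, (e y i)^2 ≤ (ε * e y i0)^2 := by
        rw [hQ y] at hy1; nlinarith
      have hQZ : 1 + ∑ i ∈ T, (e z i)^2 ≤ (ε * e z i0)^2 := by
        rw [hQ z] at hz1; nlinarith
      have key := conv_scalar a b (ε * e y i0) (ε * e z i0) _ _ _ ha hb hab hp hq hs hQY hQZ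
        (by linarith) (by linarith)
      have hsum : ∑ i ∈ T, (e (a • y + b • z) i)^2
          = a^2 * (∑ i ∈ T, (e y i)^2) + 2*(a*b) * (∑ i ∈ T, e y i * e z i)
            + b^2 * (∑ i ∈ T, (e z i)^2) := by
        rw [Finset.mul_sum, Finset.mul_sum, Finset.mul_sum, ← Finset.sum_add_distrib,
          ← Finset.sum_add_distrib]
        exact Finset.sum_congr rfl fun i _ => by rw [hez]; ring
      have h0 : (e (a • y + b • z) i0)^2 = (a * (ε * e y i0) + b * (ε * e z i0))^2 := by
        rw [hez]; nlinarith [hε2]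
      constructor
      · show 1 ≤ Q (a • y + b • z)
        rw [hQ, hsum, h0]
        linarith
      · show 1 ≤ ε * e (a • y + b • z) i0
        rw [hez]
        have h1 : a * 1 ≤ a * (ε * e y i0) := mul_le_mul_of_nonneg_left hy2 ha
        have h2 : b * 1 ≤ b * (ε * e z i0) := mul_le_mul_of_nonneg_left hz2 hb
        nlinarith
    have hPx : x ∈ P := ⟨hx1, hεx⟩
    have hPS : P ⊆ S := fun w hw => hw.1
    have hsub : P ⊆ connectedComponentIn S x :=
      hPconv.isPreconnected.subset_connectedComponentIn hPx hPS
    have hsub2 : connectedComponentIn S x ⊆ P := by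
      intro y hy
      have hyS : 1 ≤ Q y := connectedComponentIn_subset S x hy
      refine ⟨hyS, ?_⟩
      by_contra hcon
      push_neg at hcon
      have hy2 : ε * e y i0 ≤ -1 := by
        have h1 := hsq y hyS
        nlinarith
      have hcont : ContinuousOn (fun w : Fin d → ℝ => ε * e w i0) (connectedComponentIn S x) := by
        apply Continuous.continuousOn
        exact continuous_const.mul ((continuous_apply i0).comp
          (LinearMap.continuous_of_finiteDimensional (e : (Fin d → ℝ) →ₗ[ℝ] (Fin d → ℝ))))
      have hmid := isPreconnected_connectedComponentIn.intermediate_value hy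
        (mem_connectedComponentIn hx) hcont
      have h0mem : (0:ℝ) ∈ Set.Icc (ε * e y i0) (ε * e x i0) := ⟨by linarith, by linarith⟩
      obtain ⟨z, hz, hz0⟩ := hmid h0mem
      have hzS : 1 ≤ Q z := connectedComponentIn_subset S x hz
      have h2 := hsq z hzS
      have hz0' : ε * e z i0 = 0 := hz0
      have h3 : ε^2 * (e z i0)^2 = 0 := by rw [← mul_pow, hz0']; norm_num
      rw [hε2, one_mul] at h3
      linarith
    have hcomp : connectedComponentIn S x = P := le_antisymm hsub2 hsub
    rw [hcomp]
    exact hPconv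
  · -- Part 2 : global minimality
    intro L lc hQlc hLlc hgrad lam hlam
    obtain ⟨μ, hμ⟩ := hgrad
    have hQlam : 0 < Q lam := (connectedComponentIn_subset {x : Fin d → ℝ | 0 < Q x} lc) hlam
    -- derivative of L^2
    set Lc : (Fin d → ℝ) →L[ℝ] ℝ := LinearMap.toContinuousLinearMap L with hLc
    have hLC : ∀ x, Lc x = L x := fun x => rfl
    have hLder : ∀ v, fderiv ℝ (fun x => (L x)^2) lc v = 2 * L lc * L v := by
      have h1 : HasFDerivAt (fun x => Lc x * Lc x) (Lc lc • Lc + Lc lc • Lc) lc :=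
        Lc.hasFDerivAt.mul Lc.hasFDerivAt
      have h2 : HasFDerivAt (fun x => (L x)^2) (Lc lc • Lc + Lc lc • Lc) lc := by
        convert h1 using 2 with x
        rw [sq, hLC]
      intro v
      rw [h2.fderiv]
      simp [hLC]
      ring
    -- derivative of Q
    set C : Fin d → (Fin d → ℝ) →L[ℝ] ℝ := fun i =>
      (ContinuousLinearMap.proj i).comp
        (LinearMap.toContinuousLinearMap (e : (Fin d → ℝ) →ₗ[ℝ] (Fin d → ℝ))) with hCdef
    have hC : ∀ i x, C i x = e x i := fun i x => rfl
    have hder : ∀ i, HasFDerivAt (fun x => (e x i)^2) ((2 * e lc i) • C i) lc := by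
      intro i
      have h1 : HasFDerivAt (fun x => C i x * C i x) (C i lc • C i + C i lc • C i) lc :=
        (C i).hasFDerivAt.mul (C i).hasFDerivAt
      have heq : (C i lc • C i + C i lc • C i) = (2 * e lc i) • C i := by
        rw [hC]; module
      rw [heq] at h1
      convert h1 using 2 with x
      rw [sq, hC]
    have hQfun : Q = fun x => (e x i0) ^ 2 - ∑ i ∈ T, (e x i) ^ 2 := funext hQ
    have hQ' : HasFDerivAt Q ((2 * e lc i0) • C i0 - ∑ i ∈ T, (2 * e lc i) • C i) lc := by
      rw [hQfun]
      exact (hder i0).sub (HasFDerivAt.fun_sum fun i _ => hder i)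
    have hQder : ∀ v, fderiv ℝ Q lc v
        = 2 * (e lc i0 * e v i0 - ∑ i ∈ T, e lc i * e v i) := by
      intro v
      rw [hQ'.fderiv]
      simp [hC]
      rw [mul_sub, Finset.mul_sum]
      congr 1
      · ring
      · exact Finset.sum_congr rfl fun i _ => by ring
    have hQalt : ∀ y : Fin d → ℝ, Q y = e y i0 * e y i0 - ∑ i ∈ T, e y i * e y i := by
      intro y
      rw [hQ y]
      simp only [pow_two]
    -- extract the two key scalar equations
    have hμval : L lc * L lc = μ * Q lc := by
      have h := hμ lc
      rw [hLder, hQder, ← hQalt] at h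
      linarith
    set B : ℝ := e lc i0 * e lam i0 - ∑ i ∈ T, e lc i * e lam i with hBdef
    have hLlam : L lc * L lam = μ * B := by
      have h := hμ lam
      rw [hLder, hQder] at h
      rw [← hBdef] at h
      linarith
    -- reverse Cauchy-Schwarz
    have hrev : Q lc * Q lam ≤ B^2 := by
      have h1 : (∑ i ∈ T, (e lc i)^2) < (e lc i0)^2 := by
        have := hQlc; rw [hQ lc] at this; linarith
      have h2 : (∑ i ∈ T, (e lam i)^2) < (e lam i0)^2 := by
        have := hQlam; rw [hQ lam] at this; linarith
      have key := revCS_scalar (e lc i0) (e lam i0) _ _ _ (hsumnn lc) (hsumnn lam)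
        (hCS lc lam) h1 h2
      rw [hQ lc, hQ lam]
      exact key
    -- conclude
    rw [div_le_div_iff₀ hQlc hQlam]
    have hLlc2 : (L lc)^2 = μ * Q lc := by rw [sq]; exact hμval
    have hsqeq : (L lc * L lam)^2 = (μ * B)^2 := by rw [hLlam]
    have key : (L lc)^2 * ((L lc)^2 * Q lam) ≤ (L lc)^2 * ((L lam)^2 * Q lc) := by
      have h1 : (L lc)^2 * ((L lam)^2 * Q lc) = (μ*B)^2 * Q lc := by
        rw [← hsqeq]; ring
      have h2 : (L lc)^2 * ((L lc)^2 * Q lam) = (μ^2 * Q lc) * (Q lc * Q lam) := by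
        rw [hLlc2]; ring
      rw [h1, h2]
      calc (μ^2 * Q lc) * (Q lc * Q lam) ≤ (μ^2 * Q lc) * B^2 :=
            mul_le_mul_of_nonneg_left hrev (by positivity)
        _ = (μ*B)^2 * Q lc := by ring
    have hLlcsq : (0:ℝ) < (L lc)^2 := by positivity
    exact le_of_mul_le_mul_left key hLlcsq
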